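/- Let V, W be partial isometries on a Hilbert space H with V² = W² = 0, such that V, V* each commute with W, W*. Set A₃ = [V,V*], B₃ = [W,W*], E = V*V + VV*, F = W*W + WW*, and let R = (1/2)[A₁(B₁+B₂) + A₂(B₁−B₂)] with A₁ = V+V*, A₂ = i(V*−V), B₁ = W+W*, B₂ = i(W*−W). If y is a unit vector in the range of (VV*)(WW*), then R²y = 2y. -/

import Mathlib

open ContinuousLinearMap

set_option maxHeartbeats 1600000

/-- Let `V, W` be partial isometries with `V² = W² = 0`, with `V, V*`
commuting with `W, W*`. With `A₁ = V+V*`, `A₂ = i(V*−V)`, `B₁ = W+W*`, `B₂ = i(W*−W)`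
and `R` the associated Bell operator, if `y` is a unit vector in the range of
`(VV*)(WW*)` then `R²y = 2y`. -/
theorem stmt2 {H : Type*} [NormedAddCommGroup H] [InnerProductSpace ℂ H] [CompleteSpace H]
    (V W : H →L[ℂ] H)
    (hVpi : V * adjoint V * V = V) (hWpi : W * adjoint W * W = W)
    (hV2 : V * V = 0) (hW2 : W * W = 0)
    (hc1 : V * W = W * V) (hc2 : V * adjoint W = adjoint W * V)
    (hc3 : adjoint V * W = W * adjoint V) (hc4 : adjoint V * adjoint W = adjoint W * adjoint V)
    (y : H) (hy : ‖y‖ = 1)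
    (hrange : ((V * adjoint V) * (W * adjoint W)) y = y) :
    ((((1 : ℂ)/2) • ((V + adjoint V) * ((W + adjoint W) + Complex.I • (adjoint W - W))
        + (Complex.I • (adjoint V - V)) * ((W + adjoint W) - Complex.I • (adjoint W - W)))) ^ 2) y
      = (2 : ℂ) • y := by
  -- adjoint versions of the algebraic hypotheses
  have hV2' : adjoint V * adjoint V = 0 := by
    rw [← star_eq_adjoint, ← star_mul V V, hV2, star_zero]
  have hW2' : adjoint W * adjoint W = 0 := by
    rw [← star_eq_adjoint, ← star_mul W W, hW2, star_zero]
  have hVpi' : adjoint V * V * adjoint V = adjoint V := by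
    calc adjoint V * V * adjoint V = adjoint (V * adjoint V * V) := by
          simp [← star_eq_adjoint, star_mul]; noncomm_ring
      _ = adjoint V := by rw [hVpi]
  have hWpi' : adjoint W * W * adjoint W = adjoint W := by
    calc adjoint W * W * adjoint W = adjoint (W * adjoint W * W) := by
          simp [← star_eq_adjoint, star_mul]; noncomm_ring
      _ = adjoint W := by rw [hWpi]
  -- pointwise versions
  have zV : ∀ x : H, V (V x) = 0 := fun x => by
    rw [← ContinuousLinearMap.mul_apply, hV2, zero_apply]
  have zV' : ∀ x : H, adjoint V (adjoint V x) = 0 := fun x => by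
    rw [← ContinuousLinearMap.mul_apply, hV2', zero_apply]
  have zW : ∀ x : H, W (W x) = 0 := fun x => by
    rw [← ContinuousLinearMap.mul_apply, hW2, zero_apply]
  have zW' : ∀ x : H, adjoint W (adjoint W x) = 0 := fun x => by
    rw [← ContinuousLinearMap.mul_apply, hW2', zero_apply]
  have piV : ∀ x : H, V (adjoint V (V x)) = V x := fun x => by
    rw [← ContinuousLinearMap.mul_apply, ← ContinuousLinearMap.mul_apply, hVpi]
  have piV' : ∀ x : H, adjoint V (V (adjoint V x)) = adjoint V x := fun x => by
    rw [← ContinuousLinearMap.mul_apply, ← ContinuousLinearMap.mul_apply, hVpi']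
  have piW : ∀ x : H, W (adjoint W (W x)) = W x := fun x => by
    rw [← ContinuousLinearMap.mul_apply, ← ContinuousLinearMap.mul_apply, hWpi]
  have piW' : ∀ x : H, adjoint W (W (adjoint W x)) = adjoint W x := fun x => by
    rw [← ContinuousLinearMap.mul_apply, ← ContinuousLinearMap.mul_apply, hWpi']
  -- commutation, oriented to move W-type operators inward
  have c1 : ∀ x : H, W (V x) = V (W x) := fun x => by
    rw [← ContinuousLinearMap.mul_apply, ← ContinuousLinearMap.mul_apply, hc1]
  have c2 : ∀ x : H, W (adjoint V x) = adjoint V (W x) := fun x => by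
    rw [← ContinuousLinearMap.mul_apply, ← ContinuousLinearMap.mul_apply, ← hc3]
  have c3 : ∀ x : H, adjoint W (V x) = V (adjoint W x) := fun x => by
    rw [← ContinuousLinearMap.mul_apply, ← ContinuousLinearMap.mul_apply, hc2]
  have c4 : ∀ x : H, adjoint W (adjoint V x) = adjoint V (adjoint W x) := fun x => by
    rw [← ContinuousLinearMap.mul_apply, ← ContinuousLinearMap.mul_apply, ← hc4]
  -- the range hypothesis, pointwise
  have hy' : V (adjoint V (W (adjoint W y))) = y := by
    simpa [ContinuousLinearMap.mul_apply] using hrange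
  -- key pointwise facts about y
  have hVy : V y = 0 := by
    rw [← hy']
    rw [zV]
  have hWy : W y = 0 := by
    rw [← hy', c1, c2, zW, map_zero, map_zero]
  have hQy : W (adjoint W y) = y := by
    conv_lhs => rw [← hy', c3, c4, c1, c2, piW']
    exact hy'
  have hPy : V (adjoint V y) = y := by
    conv_lhs => rw [← hy', piV']
    exact hy'
  have hVW'y : V (adjoint W y) = 0 := by
    rw [← c3, hVy, map_zero]
  have hVz : V (adjoint V (adjoint W y)) = adjoint W y := by
    rw [← c4, ← c3, hPy]
  -- now compute
  simp only [pow_two, ContinuousLinearMap.mul_apply, add_apply, sub_apply, smul_apply, map_add, map_sub,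
    map_smul, map_zero, smul_zero, zero_smul, add_zero, zero_add, sub_zero, zero_sub,
    smul_neg, map_neg, neg_zero,
    c1, c2, c3, c4, zV, zV', zW, zW', hVy, hWy, hQy, hPy, hVW'y, hVz]
  match_scalars
  all_goals ring_nf
  all_goals norm_num [Complex.I_sq, pow_succ]
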